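/- Law of large numbers for Martin-Löf P-random sequences: Let Ω be an alphabet and P a finite probability space on Ω. If α ∈ Ω^∞ is Martin-Löf random with respect to the Bernoulli measure λ_P, then for every a ∈ Ω, the relative frequency N_a(α↾n)/n converges to P(a) as n → ∞, where N_a(σ) is the number of occurrences of a in the finite string σ and α↾n is the length-n prefix of α. -/

import Mathlib

open MeasureTheory Filter

/-- The cylinder set of all infinite sequences extending the finite string `σ`. -/
def cylinder {Ω : Type*} (σ : List Ω) : Set (ℕ → Ω) :=
  {α | ∀ i : Fin σ.length, α i = σ.get i}

/-- The open set `[S]` generated by a set `S` of finite strings. -/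
def openCyl {Ω : Type*} (S : Set (List Ω)) : Set (ℕ → Ω) :=
  ⋃ σ ∈ S, cylinder σ

/-- A set of strings is prefix-free if no member is a proper prefix of another. -/
def PrefixFreeSet {Ω : Type*} (S : Set (List Ω)) : Prop :=
  ∀ σ ∈ S, ∀ τ ∈ S, σ <+: τ → σ = τ

/-- A set is recursively enumerable: the domain of a partial recursive function. -/
def IsRE {α : Type*} [Primcodable α] (p : Set α) : Prop :=
  ∃ f : α →. Unit, Partrec f ∧ ∀ a, a ∈ p ↔ (f a).Dom

/-- A Martin-Löf test with respect to the measure `μ`: a recursively enumerable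
`C ⊆ ℕ⁺ × Ω*` whose sections `Cₙ` (for `n ≥ 1`) are prefix-free with
`μ [Cₙ] < 2⁻ⁿ`. -/
def MLTest {Ω : Type*} [Primcodable Ω] [MeasurableSpace Ω]
    (μ : Measure (ℕ → Ω)) (C : Set (ℕ × List Ω)) : Prop :=
  IsRE C ∧ ∀ n : ℕ, 1 ≤ n →
    PrefixFreeSet {σ | (n, σ) ∈ C} ∧
    μ (openCyl {σ | (n, σ) ∈ C}) < (2 : ENNReal)⁻¹ ^ n

/-- `α` is Martin-Löf random with respect to `μ` if it avoids `⋂_{n≥1} [Cₙ]`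
for every Martin-Löf test `C` with respect to `μ`. -/
def MLRandom {Ω : Type*} [Primcodable Ω] [MeasurableSpace Ω]
    (μ : Measure (ℕ → Ω)) (α : ℕ → Ω) : Prop :=
  ∀ C : Set (ℕ × List Ω), MLTest μ C →
    α ∉ ⋂ n ∈ {n : ℕ | 1 ≤ n}, openCyl {σ | (n, σ) ∈ C}

namespace MLLLN
open scoped Topology

/-! Auxiliary material for the proof of the law of large numbers. -/

variable {Ω : Type*}

def bse (c d M n l k : ℕ) : Bool :=
  (decide (l % d = 0) && decide (d * M * n ≤ l)) && decide (c * l ≤ d * k)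

def stepF (χ : Ω → Bool) (c d M n : ℕ) (s : ℕ × ℕ × Bool) (b : Ω) : ℕ × ℕ × Bool :=
  (s.1 + 1, s.2.1 + (bif χ b then 1 else 0), s.2.2 || bse c d M n s.1 s.2.1)

def scan (χ : Ω → Bool) (c d M n : ℕ) (σ : List Ω) : ℕ × ℕ × Bool :=
  σ.foldl (stepF χ c d M n) (0, 0, false)

def memC (χ : Ω → Bool) (c d M : ℕ) (x : ℕ × List Ω) : Bool :=
  bse c d M x.1 (scan χ c d M x.1 x.2).1 (scan χ c d M x.1 x.2).2.1
    && !(scan χ c d M x.1 x.2).2.2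

theorem scan_fst (χ : Ω → Bool) (c d M n : ℕ) (σ : List Ω) :
    (scan χ c d M n σ).1 = σ.length := by
  induction σ using List.reverseRecOn with
  | nil => rfl
  | append_singleton σ b ih => simp [scan, stepF, List.foldl_append] at ih ⊢; omega

theorem scan_snd (χ : Ω → Bool) (c d M n : ℕ) (σ : List Ω) :
    (scan χ c d M n σ).2.1 = σ.countP χ := by
  induction σ using List.reverseRecOn with
  | nil => rfl
  | append_singleton σ b ih =>
      simp [scan, stepF, List.foldl_append, List.countP_append, List.countP_cons] at ih ⊢
      cases h : χ b <;> simp [h, ih]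

theorem scan_flag (χ : Ω → Bool) (c d M n : ℕ) (σ : List Ω) :
    (scan χ c d M n σ).2.2 = true ↔
      ∃ l < σ.length, bse c d M n l ((σ.take l).countP χ) = true := by
  induction σ using List.reverseRecOn with
  | nil => simp [scan]
  | append_singleton σ b ih =>
      have h1 := scan_fst χ c d M n σ
      have h2 := scan_snd χ c d M n σ
      have : (scan χ c d M n (σ ++ [b])).2.2
          = ((scan χ c d M n σ).2.2 || bse c d M n σ.length (σ.countP χ)) := by
        simp only [scan, stepF, List.foldl_append, List.foldl_cons, List.foldl_nil]
        rw [show (List.foldl (stepF χ c d M n) (0, 0, false) σ) = scan χ c d M n σ from rfl,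
          h1, h2]
      rw [this]
      constructor
      · intro h
        rcases Bool.or_eq_true_iff.mp h with h | h
        · obtain ⟨l, hl, hb⟩ := ih.mp h
          exact ⟨l, by simp; omega, by rwa [List.take_append_of_le_length hl.le]⟩
        · exact ⟨σ.length, by simp, by
            rwa [List.take_append_of_le_length le_rfl, List.take_length]⟩
      · rintro ⟨l, hl, hb⟩
        simp only [List.length_append, List.length_singleton] at hl
        rcases lt_or_eq_of_le (Nat.lt_succ_iff.mp hl) with hl' | hl'
        · rw [List.take_append_of_le_length hl'.le] at hb
          exact Bool.or_eq_true_iff.mpr (Or.inl (ih.mpr ⟨l, hl', hb⟩))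
        · subst hl'
          rw [List.take_append_of_le_length le_rfl, List.take_length] at hb
          exact Bool.or_eq_true_iff.mpr (Or.inr hb)

theorem memC_iff (χ : Ω → Bool) (c d M n : ℕ) (σ : List Ω) :
    memC χ c d M (n, σ) = true ↔
      bse c d M n σ.length (σ.countP χ) = true ∧
      ∀ l < σ.length, ¬ (bse c d M n l ((σ.take l).countP χ) = true) := by
  simp only [memC, Bool.and_eq_true, Bool.not_eq_true', Bool.not_eq_true]
  rw [scan_fst, scan_snd]
  constructor
  · rintro ⟨h1, h2⟩
    refine ⟨h1, fun l hl => ?_⟩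
    rw [Bool.eq_false_iff]
    intro hb
    have : (scan χ c d M n σ).2.2 = true := (scan_flag χ c d M n σ).mpr ⟨l, hl, hb⟩
    rw [h2] at this; exact Bool.false_ne_true this
  · rintro ⟨h1, h2⟩
    refine ⟨h1, ?_⟩
    rw [Bool.eq_false_iff]
    intro hc
    obtain ⟨l, hl, hb⟩ := (scan_flag χ c d M n σ).mp hc
    rw [h2 l hl] at hb; exact Bool.false_ne_true hb

theorem primrec_bse (c d M : ℕ) :
    Primrec fun x : ℕ × ℕ × ℕ => bse c d M x.1 x.2.1 x.2.2 := by
  have h1 : Primrec fun x : ℕ × ℕ × ℕ => decide (x.2.1 % d = 0) :=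
    (Primrec.eq.comp (Primrec.nat_mod.comp (Primrec.fst.comp Primrec.snd)
      (Primrec.const d)) (Primrec.const 0)).decide
  have h2 : Primrec fun x : ℕ × ℕ × ℕ => decide (d * M * x.1 ≤ x.2.1) :=
    (Primrec.nat_le.comp (Primrec.nat_mul.comp (Primrec.const (d * M)) Primrec.fst)
      (Primrec.fst.comp Primrec.snd)).decide
  have h3 : Primrec fun x : ℕ × ℕ × ℕ => decide (c * x.2.1 ≤ d * x.2.2) :=
    (Primrec.nat_le.comp (Primrec.nat_mul.comp (Primrec.const c) (Primrec.fst.comp Primrec.snd))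
      (Primrec.nat_mul.comp (Primrec.const d) (Primrec.snd.comp Primrec.snd))).decide
  exact Primrec.and.comp (Primrec.and.comp h1 h2) h3

theorem primrec_memC [Primcodable Ω] (χ : Ω → Bool) (hχ : Primrec χ) (c d M : ℕ) :
    Primrec (memC χ c d M) := by
  have hstep : Primrec₂ fun (a : ℕ × List Ω) (p : (ℕ × ℕ × Bool) × Ω) =>
      stepF χ c d M a.1 p.1 p.2 := by
    unfold stepF
    have e1 : Primrec fun z : (ℕ × List Ω) × ((ℕ × ℕ × Bool) × Ω) => z.2.1.1 + 1 :=
      Primrec.succ.comp (Primrec.fst.comp (Primrec.fst.comp Primrec.snd))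
    have e2 : Primrec fun z : (ℕ × List Ω) × ((ℕ × ℕ × Bool) × Ω) =>
        z.2.1.2.1 + (bif χ z.2.2 then 1 else 0) :=
      Primrec.nat_add.comp
        (Primrec.fst.comp (Primrec.snd.comp (Primrec.fst.comp Primrec.snd)))
        (Primrec.cond (hχ.comp (Primrec.snd.comp Primrec.snd)) (Primrec.const 1)
          (Primrec.const 0))
    have e3 : Primrec fun z : (ℕ × List Ω) × ((ℕ × ℕ × Bool) × Ω) =>
        z.2.1.2.2 || bse c d M z.1.1 z.2.1.1 z.2.1.2.1 :=
      Primrec.or.comp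
        (Primrec.snd.comp (Primrec.snd.comp (Primrec.fst.comp Primrec.snd)))
        ((primrec_bse c d M).comp (Primrec.pair (Primrec.fst.comp Primrec.fst)
          (Primrec.pair (Primrec.fst.comp (Primrec.fst.comp Primrec.snd))
            (Primrec.fst.comp (Primrec.snd.comp (Primrec.fst.comp Primrec.snd))))))
    exact e1.pair (e2.pair e3)
  have hscan : Primrec fun x : ℕ × List Ω => scan χ c d M x.1 x.2 :=
    (Primrec.list_foldl Primrec.snd (Primrec.const ((0, 0, false) : ℕ × ℕ × Bool))
      hstep).of_eq fun x => rfl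
  unfold memC
  exact Primrec.and.comp
    ((primrec_bse c d M).comp (Primrec.pair Primrec.fst
      (Primrec.pair (Primrec.fst.comp hscan)
        (Primrec.fst.comp (Primrec.snd.comp hscan)))))
    (Primrec.not.comp (Primrec.snd.comp (Primrec.snd.comp hscan)))

def cnt (χ : Ω → Bool) (α : ℕ → Ω) (n : ℕ) : ℕ :=
  ((Finset.range n).filter fun i => χ (α i) = true).card

def pre (α : ℕ → Ω) (n : ℕ) : List Ω := List.ofFn fun i : Fin n => α i

@[simp] theorem length_pre (α : ℕ → Ω) (n : ℕ) : (pre α n).length = n := by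
  simp [pre]

theorem countP_ofFn (χ : Ω → Bool) : ∀ {k : ℕ} (f : Fin k → Ω),
    (List.ofFn f).countP χ = (Finset.univ.filter fun i => χ (f i) = true).card := by
  intro k
  induction k with
  | zero => intro f; simp
  | succ k ih =>
      intro f
      rw [List.ofFn_succ, List.countP_cons, ih (fun i => f i.succ),
        Finset.card_filter, Finset.card_filter, Fin.sum_univ_succ]
      by_cases h : χ (f 0) = true <;> simp [h] <;> omega

theorem countP_pre (χ : Ω → Bool) (α : ℕ → Ω) (n : ℕ) :
    (pre α n).countP χ = cnt χ α n := by
  rw [pre, countP_ofFn, cnt, Finset.card_filter, Finset.card_filter,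
    Finset.sum_range fun i => if χ (α i) = true then 1 else 0]

theorem take_pre (α : ℕ → Ω) {l n : ℕ} (h : l ≤ n) : (pre α n).take l = pre α l := by
  apply List.ext_get
  · simp [h]
  · intro i h1 h2
    simp only [pre, List.get_eq_getElem, List.getElem_take, List.getElem_ofFn]

theorem cnt_mono (χ : Ω → Bool) (α : ℕ → Ω) {m n : ℕ} (h : m ≤ n) :
    cnt χ α m ≤ cnt χ α n :=
  Finset.card_le_card (Finset.filter_subset_filter _ (Finset.range_subset_range.mpr h))

theorem cnt_le (χ : Ω → Bool) (α : ℕ → Ω) (n : ℕ) : cnt χ α n ≤ n := by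
  simpa [cnt] using Finset.card_le_card (Finset.filter_subset _ (Finset.range n))

section Fin
variable [Fintype Ω] [DecidableEq Ω]

def devF (χ : Ω → Bool) (c d k : ℕ) : Finset (List Ω) :=
  ((Finset.univ : Finset (Fin k → Ω)).image List.ofFn).filter
    fun σ => c * k ≤ d * σ.countP χ

theorem mem_devF {χ : Ω → Bool} {c d k : ℕ} {σ : List Ω} :
    σ ∈ devF χ c d k ↔ σ.length = k ∧ c * k ≤ d * σ.countP χ := by
  simp only [devF, Finset.mem_filter, Finset.mem_image, Finset.mem_univ, true_and]
  constructor
  · rintro ⟨⟨f, rfl⟩, h⟩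
    exact ⟨by simp, h⟩
  · rintro ⟨hl, h⟩
    refine ⟨⟨fun j => σ.get (Fin.cast hl.symm j), ?_⟩, h⟩
    apply List.ext_get
    · simp [hl]
    · intro j h1 h2
      simp [List.get_ofFn]

theorem dev_sum_le (P : Ω → ℝ) (hP0 : ∀ a, 0 ≤ P a) (hP1 : ∑ a, P a = 1)
    (χ : Ω → Bool) (r t : ℝ) (hp : (∑ b, if χ b = true then P b else 0) ≤ r)
    (hr0 : 0 ≤ (∑ b, if χ b = true then P b else 0)) (ht : 1 ≤ t)
    (c d i : ℕ) (hd : 0 < d) :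
    ∑ σ ∈ devF χ c d (d * i), (σ.map P).prod ≤ ((1 + r * (t - 1)) ^ d / t ^ c) ^ i := by
  set p : ℝ := ∑ b, if χ b = true then P b else 0 with hpdef
  have ht0 : (0:ℝ) < t := lt_of_lt_of_le one_pos ht
  have hdev : devF χ c d (d * i) = ((Finset.univ : Finset (Fin (d * i) → Ω)).filter
      fun f => c * (d * i) ≤ d * (Finset.univ.filter fun j => χ (f j) = true).card).image
        List.ofFn := by
    rw [devF, Finset.filter_image]
    congr 1
    apply Finset.filter_congr
    intro f _
    rw [countP_ofFn]
  rw [hdev, Finset.sum_image (fun f _ g _ h => List.ofFn_injective h)]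
  have key : ∀ f : Fin (d * i) → Ω, f ∈ (Finset.univ : Finset (Fin (d * i) → Ω)).filter
      (fun f => c * (d * i) ≤ d * (Finset.univ.filter fun j => χ (f j) = true).card) →
      ((List.ofFn f).map P).prod * t ^ (c * i) ≤
        ∏ j, (P (f j) * (bif χ (f j) then t else 1)) := by
    intro f hf
    rw [Finset.mem_filter] at hf
    have hcnt : c * i ≤ (Finset.univ.filter fun j => χ (f j) = true).card := by
      have h2 : d * (c * i) ≤ d * (Finset.univ.filter fun j => χ (f j) = true).card := by
        rw [show d * (c * i) = c * (d * i) by ring]; exact hf.2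
      exact Nat.le_of_mul_le_mul_left h2 hd
    rw [List.map_ofFn, List.prod_ofFn, Finset.prod_mul_distrib]
    have hprodcond : (∏ j, (bif χ (f j) then t else 1)) =
        t ^ (Finset.univ.filter fun j => χ (f j) = true).card := by
      simp only [Bool.cond_eq_ite]
      rw [Finset.prod_ite, Finset.prod_const, Finset.prod_const, one_pow, mul_one]
    rw [hprodcond]
    apply mul_le_mul_of_nonneg_left (pow_le_pow_right₀ ht hcnt)
    exact Finset.prod_nonneg fun j _ => hP0 _
  have hsum : ∑ f : Fin (d * i) → Ω, ∏ j, (P (f j) * (bif χ (f j) then t else 1)) =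
      (∑ b, P b * (bif χ b then t else 1)) ^ (d * i) := by
    rw [← Fintype.prod_sum fun (_ : Fin (d * i)) (b : Ω) => P b * (bif χ b then t else 1)]
    rw [Finset.prod_const, Finset.card_univ, Fintype.card_fin]
  have hbase : (∑ b, P b * (bif χ b then t else 1)) = 1 + p * (t - 1) := by
    have : ∀ b, P b * (bif χ b then t else 1)
        = P b + (if χ b = true then P b else 0) * (t - 1) := by
      intro b; cases h : χ b <;> simp [h] <;> ring
    simp only [this, Finset.sum_add_distrib, hP1, ← Finset.sum_mul, hpdef]
  have hbase0 : (0:ℝ) ≤ 1 + p * (t - 1) := by nlinarith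
  have hbaser : 1 + p * (t - 1) ≤ 1 + r * (t - 1) := by nlinarith
  have step1 : (∑ f ∈ (Finset.univ : Finset (Fin (d * i) → Ω)).filter
      (fun f => c * (d * i) ≤ d * (Finset.univ.filter fun j => χ (f j) = true).card),
        ((List.ofFn f).map P).prod) * t ^ (c * i) ≤ (1 + r * (t - 1)) ^ (d * i) := by
    rw [Finset.sum_mul]
    calc _ ≤ ∑ f ∈ Finset.filter _ Finset.univ,
            ∏ j, (P (f j) * (bif χ (f j) then t else 1)) := Finset.sum_le_sum key
      _ ≤ ∑ f : Fin (d * i) → Ω, ∏ j, (P (f j) * (bif χ (f j) then t else 1)) := by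
          apply Finset.sum_le_sum_of_subset_of_nonneg (Finset.filter_subset _ _)
          intro f _ _
          apply Finset.prod_nonneg
          intro j _
          have : (0:ℝ) < (bif χ (f j) then t else 1) := by
            cases h : χ (f j) <;> simp [h] <;> linarith
          exact mul_nonneg (hP0 _) this.le
      _ = (∑ b, P b * (bif χ b then t else 1)) ^ (d * i) := hsum
      _ ≤ (1 + r * (t - 1)) ^ (d * i) := by
          rw [hbase]; exact pow_le_pow_left₀ hbase0 hbaser _
  have htpow : (0:ℝ) < t ^ (c * i) := pow_pos ht0 _
  rw [div_pow, ← pow_mul, ← pow_mul]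
  exact (le_div_iff₀ htpow).mpr step1

end Fin

theorem exists_good_t (r : ℝ) (hr0 : 0 ≤ r) (c d : ℕ) (h : (d:ℝ) * r < c) :
    ∃ t : ℝ, 1 < t ∧ (1 + r * (t - 1)) ^ d < t ^ c := by
  set g : ℝ → ℝ := fun t => t ^ c - (1 + r * (t - 1)) ^ d with hgdef
  have hd1 : HasDerivAt (fun t : ℝ => t ^ c) ((c:ℝ) * 1 ^ (c - 1)) 1 := hasDerivAt_pow c 1
  have hd2 : HasDerivAt (fun t : ℝ => 1 + r * (t - 1)) r 1 := by
    have h0 := (((hasDerivAt_id (1:ℝ)).sub_const (1:ℝ)).const_mul r).const_add 1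
    simpa using h0
  have hd3 : HasDerivAt (fun t : ℝ => (1 + r * (t - 1)) ^ d)
      ((d:ℝ) * (1 + r * ((1:ℝ) - 1)) ^ (d - 1) * r) 1 := hd2.pow d
  have hgd : HasDerivAt g ((c:ℝ) - (d:ℝ) * r) 1 := by
    have h0 := hd1.sub hd3
    simp only [one_pow, sub_self, mul_zero, add_zero, mul_one] at h0
    exact h0
  have hslope : Tendsto (slope g 1) (𝓝[≠] (1:ℝ)) (𝓝 ((c:ℝ) - (d:ℝ) * r)) :=
    hasDerivAt_iff_tendsto_slope.mp hgd
  have hpos : (0:ℝ) < (c:ℝ) - (d:ℝ) * r := by linarith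
  have h1 : ∀ᶠ t in 𝓝[>] (1:ℝ), 0 < slope g 1 t := by
    refine (hslope.mono_left (nhdsWithin_mono _ ?_)).eventually (lt_mem_nhds hpos)
    intro x hx
    exact ne_of_gt hx
  have h2 : ∀ᶠ t in 𝓝[>] (1:ℝ), t ∈ Set.Ioi (1:ℝ) := self_mem_nhdsWithin
  obtain ⟨t, hts, htm⟩ := (h1.and h2).exists
  have ht1 : (1:ℝ) < t := htm
  refine ⟨t, ht1, ?_⟩
  rw [slope_def_field] at hts
  have hg1 : g 1 = 0 := by simp [hgdef]
  rw [hg1, sub_zero] at hts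
  have hgt : 0 < g t := by
    have := mul_pos hts (sub_pos.mpr ht1)
    rwa [div_mul_cancel₀ _ (by linarith : t - 1 ≠ 0)] at this
  have : g t = t ^ c - (1 + r * (t - 1)) ^ d := rfl
  linarith [this ▸ hgt]

theorem pf_section (χ : Ω → Bool) (c d M n : ℕ) :
    PrefixFreeSet {σ : List Ω | memC χ c d M (n, σ) = true} := by
  intro σ hσ τ hτ hpre
  by_contra hne
  have hlt : σ.length < τ.length :=
    lt_of_le_of_ne hpre.length_le fun h => hne (hpre.eq_of_length h)
  have h1 := ((memC_iff χ c d M n σ).mp hσ).1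
  have h2 := ((memC_iff χ c d M n τ).mp hτ).2 σ.length hlt
  rw [← List.prefix_iff_eq_take.mp hpre] at h2
  exact h2 h1

theorem mem_section (χ : Ω → Bool) (α : ℕ → Ω) (c d M : ℕ) (n : ℕ)
    (hfreq : ∃ᶠ i in atTop, c * (d * i) ≤ d * cnt χ α (d * i)) :
    α ∈ openCyl {σ : List Ω | memC χ c d M (n, σ) = true} := by
  obtain ⟨i, hi, hdev⟩ := (frequently_atTop.mp hfreq) (M * n)
  have hQ : bse c d M n (d * i) (cnt χ α (d * i)) = true := by
    unfold bse
    simp only [Bool.and_eq_true, decide_eq_true_eq]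
    refine ⟨⟨Nat.mul_mod_right d i, ?_⟩, hdev⟩
    calc d * M * n = d * (M * n) := by ring
      _ ≤ d * i := Nat.mul_le_mul_left d hi
  have hex : ∃ l, bse c d M n l (cnt χ α l) = true := ⟨d * i, hQ⟩
  refine Set.mem_biUnion (show pre α (Nat.find hex) ∈
    {σ : List Ω | memC χ c d M (n, σ) = true} from ?_) ?_
  · show memC χ c d M (n, pre α (Nat.find hex)) = true
    rw [memC_iff]
    constructor
    · rw [length_pre, countP_pre]
      exact Nat.find_spec hex
    · intro l hl
      rw [length_pre] at hl
      rw [take_pre α hl.le, countP_pre]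
      exact fun hb => Nat.find_min hex hl hb
  · intro j
    simp [pre, _root_.cylinder, List.get_ofFn]
    show α j = (List.ofFn fun i : Fin (Nat.find hex) => α i)[j.1]'(by simpa [pre] using j.2)
    simp

section Meas
variable [Fintype Ω] [DecidableEq Ω] [MeasurableSpace Ω]

theorem openCyl_finset_le (μ : Measure (ℕ → Ω)) (T : Finset (List Ω)) :
    μ (openCyl (↑T : Set (List Ω))) ≤ ∑ σ ∈ T, μ (_root_.cylinder σ) := by
  have : openCyl (↑T : Set (List Ω)) = ⋃ σ ∈ T, _root_.cylinder σ := by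
    simp [openCyl]
  rw [this]
  exact measure_biUnion_finset_le T _root_.cylinder

theorem meas_section (P : Ω → ℝ) (hP0 : ∀ a, 0 ≤ P a) (hP1 : ∑ a, P a = 1)
    (μ : Measure (ℕ → Ω))
    (hμ : ∀ σ : List Ω, μ (cylinder σ) = ENNReal.ofReal ((σ.map P).prod))
    (χ : Ω → Bool) (r t : ℝ) (hp : (∑ b, if χ b = true then P b else 0) ≤ r)
    (hr0 : 0 ≤ (∑ b, if χ b = true then P b else 0)) (ht : 1 ≤ t)
    (c d M : ℕ) (hd : 0 < d)
    (hρ1 : (1 + r * (t - 1)) ^ d / t ^ c < 1)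
    (hM1 : ((1 + r * (t - 1)) ^ d / t ^ c) ^ M ≤ 1 / 2)
    (hM2 : ((1 + r * (t - 1)) ^ d / t ^ c) ^ M
      < (1 - (1 + r * (t - 1)) ^ d / t ^ c) / 2)
    (n : ℕ) (hn : 1 ≤ n) :
    μ (openCyl {σ : List Ω | memC χ c d M (n, σ) = true}) < (2 : ENNReal)⁻¹ ^ n := by
  have ht0 : (0:ℝ) < t := lt_of_lt_of_le one_pos ht
  set ρ : ℝ := (1 + r * (t - 1)) ^ d / t ^ c with hρdef
  have hr0' : (0:ℝ) ≤ r := le_trans hr0 hp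
  have hρ0 : 0 < ρ := by
    apply div_pos (pow_pos (by nlinarith) d) (pow_pos ht0 c)
  -- inclusion into union of finite levels
  have hsub : openCyl {σ : List Ω | memC χ c d M (n, σ) = true} ⊆
      ⋃ j : ℕ, openCyl (↑(devF χ c d (d * (M * n + j))) : Set (List Ω)) := by
    intro x hx
    obtain ⟨σ, hσ, hxσ⟩ := Set.mem_iUnion₂.mp hx
    have hb := ((memC_iff χ c d M n σ).mp hσ).1
    unfold bse at hb
    simp only [Bool.and_eq_true, decide_eq_true_eq] at hb
    obtain ⟨⟨hmod, hge⟩, hcnt⟩ := hb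
    have hdvd : d ∣ σ.length := Nat.dvd_of_mod_eq_zero hmod
    set i : ℕ := σ.length / d with hidef
    have hlen : σ.length = d * i := by
      rw [hidef, Nat.mul_div_cancel' hdvd]
    have hiMn : M * n ≤ i := by
      have : d * (M * n) ≤ d * i := by
        calc d * (M * n) = d * M * n := by ring
          _ ≤ σ.length := hge
          _ = d * i := hlen
      exact Nat.le_of_mul_le_mul_left this hd
    refine Set.mem_iUnion.mpr ⟨i - M * n, ?_⟩
    have hci : M * n + (i - M * n) = i := by omega
    refine Set.mem_biUnion ?_ hxσ
    rw [Finset.mem_coe, mem_devF, hci, ← hlen]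
    exact ⟨rfl, hcnt⟩
  -- per-level bounds
  have hj : ∀ j : ℕ, μ (openCyl (↑(devF χ c d (d * (M * n + j))) : Set (List Ω)))
      ≤ ENNReal.ofReal (ρ ^ (M * n + j)) := by
    intro j
    refine le_trans (openCyl_finset_le μ _) ?_
    have : ∑ σ ∈ devF χ c d (d * (M * n + j)), μ (cylinder σ)
        = ENNReal.ofReal (∑ σ ∈ devF χ c d (d * (M * n + j)), (σ.map P).prod) := by
      rw [ENNReal.ofReal_sum_of_nonneg]
      · exact Finset.sum_congr rfl fun σ _ => hμ σ
      · intro σ _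
        apply List.prod_nonneg
        intro x hx
        obtain ⟨y, _, rfl⟩ := List.mem_map.mp hx
        exact hP0 y
    rw [this]
    exact ENNReal.ofReal_le_ofReal
      (dev_sum_le P hP0 hP1 χ r t hp hr0 ht c d (M * n + j) hd)
  -- sum up
  have hsummable : Summable fun j : ℕ => ρ ^ (M * n) * ρ ^ j :=
    (summable_geometric_of_lt_one hρ0.le hρ1).mul_left _
  have htotal : μ (openCyl {σ : List Ω | memC χ c d M (n, σ) = true})
      ≤ ENNReal.ofReal (ρ ^ (M * n) * (1 - ρ)⁻¹) := by
    calc μ _ ≤ μ (⋃ j : ℕ, openCyl (↑(devF χ c d (d * (M * n + j))) : Set (List Ω))) :=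
          measure_mono hsub
      _ ≤ ∑' j : ℕ, μ (openCyl (↑(devF χ c d (d * (M * n + j))) : Set (List Ω))) :=
          measure_iUnion_le _
      _ ≤ ∑' j : ℕ, ENNReal.ofReal (ρ ^ (M * n + j)) := ENNReal.tsum_le_tsum hj
      _ = ∑' j : ℕ, ENNReal.ofReal (ρ ^ (M * n) * ρ ^ j) := by
          congr 1; funext j; rw [pow_add]
      _ = ENNReal.ofReal (∑' j : ℕ, ρ ^ (M * n) * ρ ^ j) :=
          (ENNReal.ofReal_tsum_of_nonneg (fun j => by positivity) hsummable).symm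
      _ = ENNReal.ofReal (ρ ^ (M * n) * (1 - ρ)⁻¹) := by
          rw [tsum_mul_left, tsum_geometric_of_lt_one hρ0.le hρ1]
  -- final numeric bound
  have hhalf : (2 : ENNReal)⁻¹ ^ n = ENNReal.ofReal ((2⁻¹ : ℝ) ^ n) := by
    rw [ENNReal.ofReal_pow (by norm_num)]
    congr 1
    rw [ENNReal.ofReal_inv_of_pos (by norm_num), ENNReal.ofReal_ofNat]
  have hreal : ρ ^ (M * n) * (1 - ρ)⁻¹ < (2⁻¹ : ℝ) ^ n := by
    obtain ⟨m, rfl⟩ := Nat.exists_eq_add_of_le hn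
    have h1ρ : (0:ℝ) < 1 - ρ := by linarith
    have hstep : ρ ^ M * (1 - ρ)⁻¹ < 2⁻¹ := by
      have h3 := mul_lt_mul_of_pos_right hM2 (by positivity : (0:ℝ) < (1 - ρ)⁻¹)
      calc ρ ^ M * (1 - ρ)⁻¹ < (1 - ρ) / 2 * (1 - ρ)⁻¹ := h3
        _ = 2⁻¹ := by field_simp
    have hM1' : ρ ^ M ≤ (2⁻¹ : ℝ) := by rw [show ((2:ℝ))⁻¹ = 1/2 by norm_num]; exact hM1
    have hpowm : (ρ ^ M) ^ m ≤ (2⁻¹ : ℝ) ^ m :=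
      pow_le_pow_left₀ (pow_nonneg hρ0.le M) hM1' m
    calc ρ ^ (M * (1 + m)) * (1 - ρ)⁻¹
        = (ρ ^ M) ^ m * (ρ ^ M * (1 - ρ)⁻¹) := by
          rw [pow_mul, pow_add, pow_one]; ring
      _ ≤ (2⁻¹ : ℝ) ^ m * (ρ ^ M * (1 - ρ)⁻¹) :=
          mul_le_mul_of_nonneg_right hpowm (by positivity)
      _ < (2⁻¹ : ℝ) ^ m * 2⁻¹ := by
          exact mul_lt_mul_of_pos_left hstep (by positivity)
      _ = (2⁻¹ : ℝ) ^ (1 + m) := by rw [pow_add, pow_one]; ring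
  calc μ _ ≤ ENNReal.ofReal (ρ ^ (M * n) * (1 - ρ)⁻¹) := htotal
    _ < (2 : ENNReal)⁻¹ ^ n := by
        rw [hhalf]
        exact (ENNReal.ofReal_lt_ofReal_iff (by positivity)).mpr hreal

end Meas

theorem key {Ω : Type*} [Fintype Ω] [DecidableEq Ω] [Primcodable Ω] [MeasurableSpace Ω]
    (P : Ω → ℝ) (hP0 : ∀ a, 0 ≤ P a) (hP1 : ∑ a : Ω, P a = 1)
    (μ : Measure (ℕ → Ω))
    (hμ : ∀ σ : List Ω, μ (_root_.cylinder σ) = ENNReal.ofReal ((σ.map P).prod))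
    (α : ℕ → Ω) (hα : MLRandom μ α)
    (χ : Ω → Bool) (hχ : Primrec χ) (r : ℝ) (q : ℚ)
    (hp : (∑ b, if χ b = true then P b else 0) ≤ r)
    (hr0 : 0 ≤ (∑ b, if χ b = true then P b else 0))
    (hrq : r < (q : ℝ)) :
    ∀ᶠ n in atTop, (cnt χ α n : ℝ) < q * n := by
  by_contra hcon
  rw [Filter.not_eventually] at hcon
  have hcon' : ∃ᶠ n in atTop, (q : ℝ) * n ≤ cnt χ α n := by
    apply hcon.mono
    intro n hn
    exact not_lt.mp hn
  have hr0' : (0:ℝ) ≤ r := le_trans hr0 hp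
  obtain ⟨q', hq'1, hq'2⟩ := exists_rat_btwn hrq
  set c : ℕ := q'.num.toNat with hcdef
  set d : ℕ := q'.den with hddef
  have hd : 0 < d := q'.pos
  have hq'pos : (0:ℚ) < q' := by
    have : (0:ℝ) < (q' : ℝ) := lt_of_le_of_lt hr0' hq'1
    exact_mod_cast this
  have hc : (c:ℝ) = (q' : ℝ) * d := by
    have h1 : ((q'.num : ℚ)) = q' * (q'.den : ℚ) := by
      field_simp [Rat.num_div_den]
      exact (Rat.mul_den_eq_num q').symm
    have h2 : (c : ℤ) = q'.num := Int.toNat_of_nonneg (Rat.num_nonneg.mpr hq'pos.le)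
    have h3 : ((q'.num : ℝ)) = (q' : ℝ) * (q'.den : ℝ) := by exact_mod_cast h1
    rw [← h3]
    exact_mod_cast congrArg (Int.cast : ℤ → ℝ) h2
  -- frequently, deviations at multiples of d
  have hfreq : ∃ᶠ i in atTop, c * (d * i) ≤ d * cnt χ α (d * i) := by
    rw [frequently_atTop] at hcon' ⊢
    intro i0
    set n1 : ℕ := ⌈(q' : ℝ) * d / ((q : ℝ) - q')⌉₊ with hn1def
    obtain ⟨n, hn, hqn⟩ := hcon' (max (d * i0) n1)
    refine ⟨n / d + 1, ?_, ?_⟩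
    · have h4 : d * i0 ≤ n := le_trans (le_max_left _ _) hn
      have h5 := Nat.div_add_mod n d
      have h6 := Nat.mod_lt n hd
      have h7 : d * (n / d + 1) = d * (n / d) + d := by ring
      have : d * i0 ≤ d * (n / d + 1) := by omega
      exact Nat.le_of_mul_le_mul_left this hd
    · set i := n / d + 1 with hidef
      have h5 := Nat.div_add_mod n d
      have h6 := Nat.mod_lt n hd
      have h7 : d * (n / d + 1) = d * (n / d) + d := by ring
      have hni : n < d * i := by rw [hidef]; omega
      have hmle : d * i ≤ n + d := by rw [hidef]; omega
      have hcnt : cnt χ α n ≤ cnt χ α (d * i) := cnt_mono χ α hni.le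
      have hqq' : (0:ℝ) < (q : ℝ) - q' := by linarith
      have hn1 : (q' : ℝ) * d ≤ ((q : ℝ) - q') * n := by
        have hge : n1 ≤ n := le_trans (le_max_right _ _) hn
        have h7 : ((q' : ℝ) * d / ((q : ℝ) - q')) ≤ (n : ℝ) := Nat.ceil_le.mp hge
        rw [div_le_iff₀ hqq'] at h7
        linarith [h7]
      have hrchain : (c : ℝ) * ((d * i : ℕ) : ℝ) ≤ (d : ℝ) * (cnt χ α (d * i) : ℝ) := by
        have hdin : ((d * i : ℕ) : ℝ) ≤ (n : ℝ) + d := by exact_mod_cast hmle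
        have hdin0 : (0 : ℝ) ≤ ((d * i : ℕ) : ℝ) := Nat.cast_nonneg _
        have hq'n : (q' : ℝ) * ((d * i : ℕ) : ℝ) ≤ (q : ℝ) * n := by
          nlinarith [hq'pos, hdin, hn1]
        have hcnt' : ((cnt χ α n : ℕ) : ℝ) ≤ ((cnt χ α (d * i) : ℕ) : ℝ) := by
          exact_mod_cast hcnt
        calc (c : ℝ) * ((d * i : ℕ) : ℝ) = (d : ℝ) * ((q' : ℝ) * ((d * i : ℕ) : ℝ)) := by
              rw [hc]; ring
          _ ≤ (d : ℝ) * ((q : ℝ) * n) := by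
              apply mul_le_mul_of_nonneg_left hq'n (Nat.cast_nonneg d)
          _ ≤ (d : ℝ) * (cnt χ α n : ℝ) :=
              mul_le_mul_of_nonneg_left hqn (Nat.cast_nonneg d)
          _ ≤ (d : ℝ) * (cnt χ α (d * i) : ℝ) :=
              mul_le_mul_of_nonneg_left hcnt' (Nat.cast_nonneg d)
      exact_mod_cast hrchain
  -- choose t and M
  have hdr : (d : ℝ) * r < c := by
    rw [hc]
    have : (0:ℝ) < d := by exact_mod_cast hd
    nlinarith [hq'1]
  obtain ⟨t, ht1, hρlt⟩ := exists_good_t r hr0' c d hdr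
  have ht0 : (0:ℝ) < t := by linarith
  set ρ : ℝ := (1 + r * (t - 1)) ^ d / t ^ c with hρdef
  have hρ0 : 0 < ρ := div_pos (pow_pos (by nlinarith) d) (pow_pos ht0 c)
  have hρ1 : ρ < 1 := (div_lt_one (pow_pos ht0 c)).mpr hρlt
  have hmin : (0:ℝ) < min (1/2) ((1 - ρ)/2) := by
    apply lt_min (by norm_num)
    linarith
  obtain ⟨M, hM⟩ := exists_pow_lt_of_lt_one hmin hρ1
  have hM1 : ρ ^ M ≤ 1/2 := le_of_lt (lt_of_lt_of_le hM (min_le_left _ _))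
  have hM2 : ρ ^ M < (1 - ρ)/2 := lt_of_lt_of_le hM (min_le_right _ _)
  set C : Set (ℕ × List Ω) := {x | memC χ c d M x = true} with hCdef
  have hTest : MLTest μ C := by
    constructor
    · refine ⟨fun x => Part.assert (x ∈ C) fun _ => Part.some (), ?_, ?_⟩
      · exact ComputablePred.to_re (ComputablePred.computable_iff.mpr
          ⟨memC χ c d M, (primrec_memC χ hχ c d M).to_comp, rfl⟩)
      · intro a
        constructor
        · intro h; exact ⟨h, trivial⟩
        · rintro ⟨h, -⟩; exact h
    · intro n hn
      constructor
      · exact pf_section χ c d M n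
      · exact meas_section P hP0 hP1 μ hμ χ r t hp hr0 ht1.le c d M hd hρ1 hM1 hM2 n hn
  exact hα C hTest (Set.mem_iInter₂.mpr fun n _ => mem_section χ α c d M n hfreq)

end MLLLN

/-- The law of large numbers for Martin-Löf `P`-random sequences: if `α` is
Martin-Löf random with respect to the Bernoulli measure `λ_P` (the probability
measure `μ` with `μ([σ]) = P(σ₁)⋯P(σₙ)`), then for every `a ∈ Ω` the relative
frequency `N_a(α↾n)/n` of occurrences of `a` among the first `n` symbols of `α`
converges to `P(a)`. -/
theorem stmt4 {Ω : Type*} [Fintype Ω] [DecidableEq Ω] [Primcodable Ω] [MeasurableSpace Ω]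
    (P : Ω → ℝ) (hP0 : ∀ a, 0 ≤ P a) (hP1 : ∑ a : Ω, P a = 1)
    (μ : Measure (ℕ → Ω)) [IsProbabilityMeasure μ]
    (hμ : ∀ σ : List Ω, μ (cylinder σ) = ENNReal.ofReal ((σ.map P).prod))
    (α : ℕ → Ω) (hα : MLRandom μ α) :
    ∀ a : Ω, Tendsto
      (fun n : ℕ => ((((Finset.range n).filter fun i => α i = a).card : ℝ) / n))
      atTop (nhds (P a)) := by
  intro a
  classical
  have hPa1 : P a ≤ 1 := by
    rw [← hP1]
    exact Finset.single_le_sum (fun b _ => hP0 b) (Finset.mem_univ a)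
  have hcnt_eq : ∀ n : ℕ, ((Finset.range n).filter fun i => α i = a).card
      = MLLLN.cnt (fun x => decide (x = a)) α n := by
    intro n
    unfold MLLLN.cnt
    congr 1
    simp
  have hsplit : ∀ n : ℕ, MLLLN.cnt (fun x => decide (x = a)) α n
      + MLLLN.cnt (fun x => !decide (x = a)) α n = n := by
    intro n
    unfold MLLLN.cnt
    simp only [decide_eq_true_eq, Bool.not_eq_true', decide_eq_false_iff_not]
    rw [Finset.card_filter_add_card_filter_not, Finset.card_range]
  have hsum1 : (∑ b, if (fun x => decide (x = a)) b = true then P b else 0) = P a := by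
    simp [Finset.sum_ite_eq']
  have hsum2 : (∑ b, if (fun x => !decide (x = a)) b = true then P b else 0) = 1 - P a := by
    have h : ∀ x, (if (!decide (x = a)) = true then P x else 0)
        = P x - (if x = a then P x else 0) := by
      intro x
      by_cases h : x = a <;> simp [h]
    simp only [h]
    rw [Finset.sum_sub_distrib, hP1, Finset.sum_ite_eq']
    simp
  rw [tendsto_order]
  constructor
  · -- lower: ∀ b < P a, ∀ᶠ n, b < count / n
    intro b hb
    by_cases hb0 : b < 0
    · filter_upwards [eventually_ge_atTop 1] with n hn
      have : (0:ℝ) ≤ (((Finset.range n).filter fun i => α i = a).card : ℝ) / n := by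
        positivity
      linarith
    · push_neg at hb0
      obtain ⟨q', hq'1, hq'2⟩ := exists_rat_btwn (show 1 - P a < 1 - b by linarith)
      have hev := MLLLN.key P hP0 hP1 μ hμ α hα (fun x => !decide (x = a))
        (Primrec.not.comp (Primrec.eq.comp Primrec.id (Primrec.const a)).decide)
        (1 - P a) q' (le_of_eq hsum2) (by rw [hsum2]; linarith) hq'1
      filter_upwards [hev, eventually_ge_atTop 1] with n hn h1
      have hn0 : (0:ℝ) < n := by exact_mod_cast h1
      rw [lt_div_iff₀ hn0]
      have hsp := hsplit n
      have hle : MLLLN.cnt (fun x => !decide (x = a)) α n ≤ n := MLLLN.cnt_le _ α n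
      have hcast : (MLLLN.cnt (fun x => decide (x = a)) α n : ℝ)
          = (n : ℝ) - (MLLLN.cnt (fun x => !decide (x = a)) α n : ℝ) := by
        have h9 : (MLLLN.cnt (fun x => decide (x = a)) α n : ℝ)
            + (MLLLN.cnt (fun x => !decide (x = a)) α n : ℝ) = (n : ℝ) := by
          exact_mod_cast congrArg (Nat.cast : ℕ → ℝ) hsp
        linarith
      rw [hcnt_eq, hcast]
      have hq'b : (q' : ℝ) < 1 - b := hq'2
      nlinarith [hn]
  · -- upper: ∀ b > P a, ∀ᶠ n, count / n < b
    intro b hb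
    by_cases hb1 : 1 < b
    · filter_upwards [eventually_ge_atTop 1] with n hn
      have hn0 : (0:ℝ) < n := by exact_mod_cast hn
      have hle : (((Finset.range n).filter fun i => α i = a).card : ℝ) ≤ n := by
        exact_mod_cast (hcnt_eq n ▸ MLLLN.cnt_le (fun x => decide (x = a)) α n)
      calc (((Finset.range n).filter fun i => α i = a).card : ℝ) / n ≤ 1 := by
            rw [div_le_one hn0]; exact hle
        _ < b := hb1
    · push_neg at hb1
      obtain ⟨q', hq'1, hq'2⟩ := exists_rat_btwn hb
      have hev := MLLLN.key P hP0 hP1 μ hμ α hα (fun x => decide (x = a))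
        (Primrec.eq.comp Primrec.id (Primrec.const a)).decide
        (P a) q' (le_of_eq hsum1) (by rw [hsum1]; exact hP0 a) hq'1
      filter_upwards [hev, eventually_ge_atTop 1] with n hn h1
      have hn0 : (0:ℝ) < n := by exact_mod_cast h1
      rw [div_lt_iff₀ hn0]
      rw [hcnt_eq]
      calc (MLLLN.cnt (fun x => decide (x = a)) α n : ℝ) < q' * n := hn
        _ ≤ b * n := by
            apply mul_le_mul_of_nonneg_right (le_of_lt hq'2) (le_of_lt hn0)
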